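/- A k-DPP_L(L) is a DPP (satisfies Definition of DPP with some marginal kernel) only if k = rank(L); in particular, when k = rank(L), the k-DPP with Pr{S} ∝ det(L_{S,S}) over subsets of size k has marginal kernel equal to the orthogonal projection onto the column space of L, i.e., Pr{T ⊆ S} = det((X X^†)_{T,T}) when L = XX^T. -/

import Mathlib

open Matrix

/-- The principal submatrix determinant `det(M_{T,T})`. -/
noncomputable def subdet {n : ℕ} (M : Matrix (Fin n) (Fin n) ℝ) (S : Finset (Fin n)) : ℝ :=
  (M.submatrix (fun i : {x // x ∈ S} => (i : Fin n)) (fun j : {x // x ∈ S} => (j : Fin n))).det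

open Finset Equiv Equiv.Perm

private theorem sum_sign_prod_eq_zero {l m : Type*} [Fintype l] [DecidableEq l]
    (A : Matrix l m ℝ) (B : Matrix m l ℝ) {p : l → m} (H : ¬Function.Injective p) :
    (∑ σ : Perm l, ((Perm.sign σ : ℤ) : ℝ) * ∏ x, A (σ x) (p x) * B (p x) x) = 0 := by
  obtain ⟨i, j, hpij, hij⟩ : ∃ i j, p i = p j ∧ i ≠ j := by
    rw [Function.Injective] at H
    push_neg at H
    obtain ⟨i, j, h1, h2⟩ := H
    exact ⟨i, j, h1, h2⟩
  exact
    sum_involution (fun σ _ => σ * Equiv.swap i j)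
      (fun σ _ => by
        have : (∏ x, A (σ x) (p x)) = ∏ x, A ((σ * Equiv.swap i j) x) (p x) :=
          Fintype.prod_equiv (swap i j) _ _ (by simp [apply_swap_eq_self hpij])
        simp [this, sign_swap hij, -sign_swap', prod_mul_distrib])
      (fun σ _ _ => (not_congr mul_swap_eq_iff).mpr hij) (fun _ _ => mem_univ _) fun σ _ =>
      mul_swap_involutive i j σ

private theorem det_mul_expand {l m : Type*} [Fintype l] [Fintype m] [DecidableEq l] [DecidableEq m]
    (A : Matrix l m ℝ) (B : Matrix m l ℝ) :
    (A * B).det = ∑ p ∈ (Finset.univ : Finset (l → m)).filter (fun p => Function.Injective p),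
      ∑ σ : Perm l, ((Perm.sign σ : ℤ) : ℝ) * ∏ i, A (σ i) (p i) * B (p i) i := by
  calc
    (A * B).det = ∑ p : l → m, ∑ σ : Perm l,
        ((Perm.sign σ : ℤ) : ℝ) * ∏ i, A (σ i) (p i) * B (p i) i := by
      simp only [det_apply', Matrix.mul_apply]
      simp only [prod_univ_sum, mul_sum, Fintype.piFinset_univ]
      rw [Finset.sum_comm]
    _ = _ := by
      refine (sum_subset (filter_subset _ _) fun f _ hinj ↦ sum_sign_prod_eq_zero A B ?_).symm
      simpa only [true_and, mem_filter, mem_univ] using hinj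

private theorem cauchyBinet {l m : Type*} [Fintype l] [Fintype m] [DecidableEq l] [DecidableEq m]
    (A : Matrix l m ℝ) (B : Matrix m l ℝ) :
    (A * B).det = ∑ S ∈ Finset.powersetCard (Fintype.card l) (Finset.univ : Finset m),
      ((A.submatrix id (fun i : {x // x ∈ S} => (i : m))) *
        (B.submatrix (fun i : {x // x ∈ S} => (i : m)) id)).det := by
  rw [det_mul_expand]
  have hterm : ∀ S ∈ Finset.powersetCard (Fintype.card l) (Finset.univ : Finset m),
      ((A.submatrix id (fun i : {x // x ∈ S} => (i : m))) *
        (B.submatrix (fun i : {x // x ∈ S} => (i : m)) id)).det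
      = ∑ p ∈ (Finset.univ : Finset (l → {x // x ∈ S})).filter (fun p => Function.Injective p),
          ∑ σ : Perm l, ((Perm.sign σ : ℤ) : ℝ) *
            ∏ i, A (σ i) ((p i : m)) * B ((p i : m)) i := by
    intro S _
    rw [det_mul_expand]
    rfl
  rw [Finset.sum_congr rfl hterm]
  conv_rhs => rw [Finset.sum_sigma']
  have himg : ∀ (S : Finset m) (p : l → {x // x ∈ S}), S.card = Fintype.card l →
      Function.Injective p → Finset.univ.image (fun a => ((p a : m))) = S := by
    intro S p hcard hinj
    apply Finset.eq_of_subset_of_card_le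
    · intro x hx
      simp only [Finset.mem_image] at hx
      obtain ⟨a, -, rfl⟩ := hx
      exact (p a).2
    · rw [hcard, Finset.card_image_of_injective, Finset.card_univ]
      exact fun a b hab => hinj (Subtype.ext hab)
  refine (Finset.sum_bij (fun (x : (S : Finset m) × (l → {x // x ∈ S})) _ =>
      fun a => ((x.2 a : m))) ?_ ?_ ?_ ?_).symm
  · rintro ⟨S, p⟩ hx
    simp only [Finset.mem_sigma, Finset.mem_filter, Finset.mem_univ, true_and] at hx ⊢
    exact fun a b hab => hx.2 (Subtype.ext hab)
  · rintro ⟨S₁, p₁⟩ h₁ ⟨S₂, p₂⟩ h₂ hval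
    simp only [Finset.mem_sigma, Finset.mem_powersetCard, Finset.mem_filter, Finset.mem_univ,
      true_and] at h₁ h₂
    beta_reduce at hval
    have hS : S₁ = S₂ := by
      rw [← himg S₁ p₁ h₁.1.2 h₁.2, ← himg S₂ p₂ h₂.1.2 h₂.2, hval]
    subst hS
    exact congrArg (Sigma.mk S₁) (funext fun a => Subtype.ext (congrFun hval a))
  · rintro p hp
    simp only [Finset.mem_filter, Finset.mem_univ, true_and] at hp
    refine ⟨⟨Finset.univ.image p, fun a => ⟨p a, Finset.mem_image_of_mem p (mem_univ a)⟩⟩, ?_, rfl⟩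
    simp only [Finset.mem_sigma, Finset.mem_powersetCard, Finset.mem_filter, Finset.mem_univ,
      true_and]
    refine ⟨⟨Finset.subset_univ _, ?_⟩, fun a b hab => hp (congrArg Subtype.val hab)⟩
    rw [Finset.card_image_of_injective _ hp, Finset.card_univ]
  · rintro ⟨S, p⟩ hx
    rfl

private theorem det_mul_comm' {a b : Type*} [Fintype a] [Fintype b] [DecidableEq a] [DecidableEq b]
    (h : Fintype.card a = Fintype.card b) (P : Matrix a b ℝ) (Q : Matrix b a ℝ) :
    (P * Q).det = (Q * P).det := by
  let e : a ≃ b := Fintype.equivOfCardEq h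
  have h1 : P * Q = (P.submatrix id ⇑e) * (Q.submatrix ⇑e id) := by
    rw [← Matrix.submatrix_id_id (P * Q), Matrix.submatrix_mul P Q id ⇑e id e.bijective]
  have h2 : (Q * P).submatrix ⇑e ⇑e = (Q.submatrix ⇑e id) * (P.submatrix id ⇑e) := by
    rw [Matrix.submatrix_mul Q P ⇑e id ⇑e (Function.bijective_id)]
  rw [h1, Matrix.det_mul, mul_comm, ← Matrix.det_mul, ← h2, Matrix.det_submatrix_equiv_self]

private theorem det_one_add_eq_sum_minors {m : Type*} [Fintype m] [DecidableEq m]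
    (A : Matrix m m ℝ) :
    (1 + A).det = ∑ W ∈ (Finset.univ : Finset m).powerset,
      (A.submatrix (fun i : {x // x ∈ W} => (i : m)) (fun j : {x // x ∈ W} => (j : m))).det := by
  have step1 : (1 + A).det = ∑ W ∈ (Finset.univ : Finset m).powerset, ∑ σ : Perm m,
      ((Perm.sign σ : ℤ) : ℝ) * ((∏ i ∈ W, A (σ i) i) * ∏ i ∈ Finset.univ \ W,
        (1 : Matrix m m ℝ) (σ i) i) := by
    rw [det_apply']
    have : ∀ σ : Perm m, (∏ i, (1 + A) (σ i) i)
        = ∑ W ∈ (Finset.univ : Finset m).powerset,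
          (∏ i ∈ W, A (σ i) i) * ∏ i ∈ Finset.univ \ W, (1 : Matrix m m ℝ) (σ i) i := by
      intro σ
      rw [← Finset.prod_add]
      exact Finset.prod_congr rfl fun i _ => by rw [Matrix.add_apply, add_comm]
    simp only [this, Finset.mul_sum]
    rw [Finset.sum_comm]
  rw [step1]
  refine Finset.sum_congr rfl fun W _ => ?_
  -- B_W : equals A on W×W and 1 elsewhere
  set B : Matrix m m ℝ := fun i j =>
    if i ∈ W ∧ j ∈ W then A i j else (1 : Matrix m m ℝ) i j with hB
  have hdetB : (∑ σ : Perm m, ((Perm.sign σ : ℤ) : ℝ) *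
      ((∏ i ∈ W, A (σ i) i) * ∏ i ∈ Finset.univ \ W, (1 : Matrix m m ℝ) (σ i) i)) = B.det := by
    rw [det_apply']
    refine Finset.sum_congr rfl fun σ _ => ?_
    congr 1
    by_cases hfix : ∀ i ∈ Finset.univ \ W, σ i = i
    · have hmaps : ∀ i ∈ W, σ i ∈ W := by
        intro i hi
        by_contra hsi
        have h1 : σ (σ i) = σ i := hfix (σ i) (by simp [hsi])
        have : σ i = i := σ.injective h1
        rw [this] at hsi
        exact hsi hi
      rw [← Finset.prod_sdiff (Finset.subset_univ W)]
      rw [mul_comm]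
      congr 1
      · exact Finset.prod_congr rfl fun i hi => by
          simp only [Finset.mem_sdiff] at hi
          simp [hB, hi.2]
      · exact Finset.prod_congr rfl fun i hi => by simp [hB, hi, hmaps i hi]
    · push_neg at hfix
      obtain ⟨i, hi, hsi⟩ := hfix
      rw [Finset.prod_eq_zero hi (by simp [Matrix.one_apply, hsi]), mul_zero,
        Finset.prod_eq_zero (Finset.mem_univ i)]
      simp only [Finset.mem_sdiff] at hi
      simp [hB, hi.2, Matrix.one_apply, hsi]
  rw [hdetB]
  -- now det B = det (A restricted to W)
  have e := (Equiv.sumCompl (· ∈ W)).symm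
  rw [← Matrix.det_submatrix_equiv_self (Equiv.sumCompl (fun x => x ∈ W)).symm.symm B]
  have : B.submatrix ⇑(Equiv.sumCompl (fun x => x ∈ W)) ⇑(Equiv.sumCompl (fun x => x ∈ W))
      = Matrix.fromBlocks
          (A.submatrix (fun i : {x // x ∈ W} => (i : m)) (fun j : {x // x ∈ W} => (j : m)))
          0 0 1 := by
    ext i j
    cases i with
    | inl i => cases j with
      | inl j => rw [Matrix.submatrix_apply]; simp [hB, i.2, j.2]
      | inr j =>
        have : ((i : m) : m) ≠ (j : m) := fun hc => j.2 (hc ▸ i.2)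
        rw [Matrix.submatrix_apply]
        simp [hB, (j.2 : ¬ (j : m) ∈ W), Matrix.one_apply, this]
    | inr i => cases j with
      | inl j =>
        have : ((i : m) : m) ≠ (j : m) := fun hc => i.2 (hc ▸ j.2)
        rw [Matrix.submatrix_apply]
        simp [hB, (i.2 : ¬ (i : m) ∈ W), Matrix.one_apply, this]
      | inr j =>
        by_cases hij : (i : m) = (j : m)
        · have : i = j := Subtype.ext hij
          rw [Matrix.submatrix_apply]
          simp only [hB, Matrix.submatrix_apply, Equiv.sumCompl_apply_inr,
            Matrix.fromBlocks_apply₂₂, Matrix.one_apply, hij, this, if_true]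
          rw [if_neg (fun h => absurd h.1 j.2)]
        · have : i ≠ j := fun h => hij (congrArg Subtype.val h)
          rw [Matrix.submatrix_apply]
          simp [hB, (i.2 : ¬ (i : m) ∈ W), Matrix.one_apply, hij, this]
  rw [Equiv.symm_symm, this, Matrix.det_fromBlocks_zero₂₁, Matrix.det_one, mul_one]

private theorem stepB {n k : ℕ} (X : Matrix (Fin n) (Fin k) ℝ) (hdet : IsUnit (Xᵀ * X).det)
    (W : Finset (Fin n)) :
    (∑ S ∈ Finset.powersetCard k Finset.univ, if S ∩ W = ∅ then subdet (X * Xᵀ) S else 0)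
      = (Xᵀ * X).det *
        (((1 : Matrix (Fin n) (Fin n) ℝ) - X * (Xᵀ * X)⁻¹ * Xᵀ).submatrix
          (fun i : {x // x ∈ W} => (i : Fin n)) (fun j : {x // x ∈ W} => (j : Fin n))).det := by
  classical
  set Y : Matrix (Fin n) (Fin k) ℝ := fun i j => if i ∈ W then 0 else X i j with hY
  set XW : Matrix {x // x ∈ W} (Fin k) ℝ :=
    X.submatrix (fun i : {x // x ∈ W} => (i : Fin n)) id with hXW
  -- Cauchy–Binet for YᵀY
  have hCB := cauchyBinet Yᵀ Y
  rw [Fintype.card_fin] at hCB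
  -- termwise identification
  have hterm : ∀ S ∈ Finset.powersetCard k (Finset.univ : Finset (Fin n)),
      ((Yᵀ.submatrix id (fun i : {x // x ∈ S} => (i : Fin n))) *
        (Y.submatrix (fun i : {x // x ∈ S} => (i : Fin n)) id)).det
      = (if S ∩ W = ∅ then subdet (X * Xᵀ) S else 0) := by
    intro S hS
    have hcard : S.card = k := (Finset.mem_powersetCard.mp hS).2
    have hcards : Fintype.card (Fin k) = Fintype.card {x // x ∈ S} := by
      rw [Fintype.card_coe, hcard, Fintype.card_fin]
    rw [det_mul_comm' hcards]
    have hsub : (Y.submatrix (fun i : {x // x ∈ S} => (i : Fin n)) id) *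
        (Yᵀ.submatrix id (fun i : {x // x ∈ S} => (i : Fin n)))
        = (Y * Yᵀ).submatrix (fun i : {x // x ∈ S} => (i : Fin n))
            (fun i : {x // x ∈ S} => (i : Fin n)) := by
      rw [Matrix.submatrix_mul Y Yᵀ _ id _ Function.bijective_id]
    rw [hsub]
    by_cases hSW : S ∩ W = ∅
    · rw [if_pos hSW]
      have hnot : ∀ i : Fin n, i ∈ S → i ∉ W := by
        intro i hiS hiW
        exact (Finset.notMem_empty i) (hSW ▸ Finset.mem_inter.mpr ⟨hiS, hiW⟩)
      have : (Y * Yᵀ).submatrix (fun i : {x // x ∈ S} => (i : Fin n))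
            (fun i : {x // x ∈ S} => (i : Fin n))
          = (X * Xᵀ).submatrix (fun i : {x // x ∈ S} => (i : Fin n))
            (fun i : {x // x ∈ S} => (i : Fin n)) := by
        ext i j
        simp only [Matrix.submatrix_apply, Matrix.mul_apply, Matrix.transpose_apply]
        refine Finset.sum_congr rfl fun a _ => ?_
        rw [hY]
        simp [hnot _ i.2, hnot _ j.2]
      rw [this]
      rfl
    · rw [if_neg hSW]
      obtain ⟨i, hi⟩ := Finset.nonempty_iff_ne_empty.mpr hSW
      rw [Finset.mem_inter] at hi
      apply Matrix.det_eq_zero_of_row_eq_zero ⟨i, hi.1⟩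
      intro j
      simp only [Matrix.submatrix_apply, Matrix.mul_apply, Matrix.transpose_apply]
      apply Finset.sum_eq_zero
      intro a _
      rw [hY]
      simp [hi.2]
  rw [Finset.sum_congr rfl hterm] at hCB
  -- Yᵀ * Y = G - XWᵀ * XW
  have hYY : Yᵀ * Y = Xᵀ * X - XWᵀ * XW := by
    ext a b
    rw [Matrix.sub_apply, Matrix.mul_apply, Matrix.mul_apply]
    simp only [Matrix.transpose_apply]
    simp only [Matrix.mul_apply, Matrix.transpose_apply, Matrix.sub_apply, hY, hXW,
      Matrix.submatrix_apply, id_eq]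
    have h1 : ∑ i : Fin n, (if i ∈ W then 0 else X i a) * (if i ∈ W then 0 else X i b)
        = ∑ i ∈ Finset.univ.filter (fun i => i ∉ W), X i a * X i b := by
      rw [Finset.sum_filter]
      refine Finset.sum_congr rfl fun i _ => ?_
      by_cases hiW : i ∈ W <;> simp [hiW]
    have h2 : ∑ i : {x // x ∈ W}, X (i : Fin n) a * X (i : Fin n) b
        = ∑ i ∈ W, X i a * X i b := Finset.sum_coe_sort W (fun i => X i a * X i b)
    rw [h1, h2]
    have h3 : ∑ i ∈ W, X i a * X i b
        = ∑ i ∈ Finset.univ.filter (fun i => i ∈ W), X i a * X i b := by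
      congr 1
      ext i
      simp
    rw [h3, ← Finset.sum_filter_add_sum_filter_not Finset.univ (fun i => i ∈ W)
      (fun i => X i a * X i b)]
    ring
  -- factor out G
  have hfac : Xᵀ * X - XWᵀ * XW
      = (Xᵀ * X) * (1 + (-((Xᵀ * X)⁻¹ * XWᵀ)) * XW) := by
    rw [Matrix.mul_add, Matrix.mul_one, Matrix.neg_mul, Matrix.mul_neg, ← Matrix.mul_assoc,
      ← Matrix.mul_assoc, Matrix.mul_nonsing_inv _ hdet, Matrix.one_mul, sub_eq_add_neg]
  have hWA : (1 + (-((Xᵀ * X)⁻¹ * XWᵀ)) * XW).det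
      = (1 + XW * (-((Xᵀ * X)⁻¹ * XWᵀ))).det := Matrix.det_one_add_mul_comm _ _
  have hXWmul : XW * ((Xᵀ * X)⁻¹ * XWᵀ)
      = (X * (Xᵀ * X)⁻¹ * Xᵀ).submatrix
          (fun i : {x // x ∈ W} => (i : Fin n)) (fun j : {x // x ∈ W} => (j : Fin n)) := by
    have hT : XWᵀ = Xᵀ.submatrix id (fun i : {x // x ∈ W} => (i : Fin n)) := by
      rw [hXW, Matrix.transpose_submatrix]
    have h1 : (X * ((Xᵀ * X)⁻¹ * Xᵀ)).submatrix
          (fun i : {x // x ∈ W} => (i : Fin n)) (fun j : {x // x ∈ W} => (j : Fin n))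
        = X.submatrix (fun i : {x // x ∈ W} => (i : Fin n)) id *
          ((Xᵀ * X)⁻¹ * Xᵀ).submatrix id (fun j : {x // x ∈ W} => (j : Fin n)) :=
      Matrix.submatrix_mul _ _ _ id _ Function.bijective_id
    have h2 : ((Xᵀ * X)⁻¹ * Xᵀ).submatrix id (fun j : {x // x ∈ W} => (j : Fin n))
        = (Xᵀ * X)⁻¹ * Xᵀ.submatrix id (fun j : {x // x ∈ W} => (j : Fin n)) := by
      rw [Matrix.submatrix_mul _ _ id id _ Function.bijective_id, Matrix.submatrix_id_id]
    rw [Matrix.mul_assoc, h1, h2, hXW, hT]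
  have honesub : ((1 : Matrix (Fin n) (Fin n) ℝ)).submatrix
        (fun i : {x // x ∈ W} => (i : Fin n)) (fun j : {x // x ∈ W} => (j : Fin n))
      = (1 : Matrix {x // x ∈ W} {x // x ∈ W} ℝ) := by
    ext i j
    simp only [Matrix.submatrix_apply, Matrix.one_apply, Subtype.ext_iff]
  have hfinal : (1 : Matrix {x // x ∈ W} {x // x ∈ W} ℝ) + XW * (-((Xᵀ * X)⁻¹ * XWᵀ))
      = ((1 : Matrix (Fin n) (Fin n) ℝ) - X * (Xᵀ * X)⁻¹ * Xᵀ).submatrix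
          (fun i : {x // x ∈ W} => (i : Fin n)) (fun j : {x // x ∈ W} => (j : Fin n)) := by
    have hsubsub : ((1 : Matrix (Fin n) (Fin n) ℝ) - X * (Xᵀ * X)⁻¹ * Xᵀ).submatrix
          (fun i : {x // x ∈ W} => (i : Fin n)) (fun j : {x // x ∈ W} => (j : Fin n))
        = ((1 : Matrix (Fin n) (Fin n) ℝ)).submatrix
            (fun i : {x // x ∈ W} => (i : Fin n)) (fun j : {x // x ∈ W} => (j : Fin n))
          - (X * (Xᵀ * X)⁻¹ * Xᵀ).submatrix
            (fun i : {x // x ∈ W} => (i : Fin n)) (fun j : {x // x ∈ W} => (j : Fin n)) := by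
      ext i j
      simp [Matrix.sub_apply]
    rw [hsubsub, honesub, Matrix.mul_neg, hXWmul, sub_eq_add_neg]
  rw [hYY, hfac, Matrix.det_mul, hWA, hfinal] at hCB
  exact hCB.symm

/-- When `k = rank(L)` with `L = XXᵀ` for full-rank `X ∈ ℝ^{n×k}`, the `k`-DPP with
`Pr{S} ∝ det(L_{S,S})` over size-`k` subsets is a Projection DPP: its marginal kernel is the
orthogonal projection `XX† = X(XᵀX)⁻¹Xᵀ`, i.e. `Pr{T ⊆ S} = det((XX†)_{T,T})`. -/
theorem kdpp_rank_is_projection_dpp {n k : ℕ} (X : Matrix (Fin n) (Fin k) ℝ)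
    (hrank : X.rank = k) (T : Finset (Fin n)) :
    ∑ S ∈ Finset.powersetCard k (Finset.univ : Finset (Fin n)),
      (if T ⊆ S then
        subdet (X * Xᵀ) S /
          (∑ T' ∈ Finset.powersetCard k (Finset.univ : Finset (Fin n)), subdet (X * Xᵀ) T')
      else 0)
      = subdet (X * (Xᵀ * X)⁻¹ * Xᵀ) T := by

  classical
  have hGrank : (Xᵀ * X).rank = k := by rw [Matrix.rank_transpose_mul_self, hrank]
  have hGdet : IsUnit (Xᵀ * X).det := by
    rw [isUnit_iff_ne_zero]
    intro h0
    obtain ⟨v, hv, hGv⟩ := Matrix.exists_mulVec_eq_zero_iff.mpr h0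
    have hker : v ∈ LinearMap.ker (Xᵀ * X).mulVecLin := by
      rw [LinearMap.mem_ker, Matrix.mulVecLin_apply]
      exact hGv
    have hnt : Nontrivial (LinearMap.ker (Xᵀ * X).mulVecLin) :=
      ⟨⟨⟨v, hker⟩, 0, by simp [Subtype.ext_iff, hv]⟩⟩
    have hpos : 0 < Module.finrank ℝ (LinearMap.ker (Xᵀ * X).mulVecLin) := Module.finrank_pos
    have hrn := LinearMap.finrank_range_add_finrank_ker (Xᵀ * X).mulVecLin
    rw [Module.finrank_fintype_fun_eq_card, Fintype.card_fin] at hrn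
    rw [Matrix.rank] at hGrank
    omega
  -- denominator
  have hden : (∑ T' ∈ Finset.powersetCard k (Finset.univ : Finset (Fin n)), subdet (X * Xᵀ) T')
      = (Xᵀ * X).det := by
    have h := stepB X hGdet ∅
    haveI : IsEmpty {x // x ∈ (∅ : Finset (Fin n))} :=
      ⟨fun x => absurd x.2 (Finset.notMem_empty _)⟩
    have hdet1 : (((1 : Matrix (Fin n) (Fin n) ℝ) - X * (Xᵀ * X)⁻¹ * Xᵀ).submatrix
        (fun i : {x // x ∈ (∅ : Finset (Fin n))} => (i : Fin n))
        (fun j : {x // x ∈ (∅ : Finset (Fin n))} => (j : Fin n))).det = 1 := Matrix.det_isEmpty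
    rw [hdet1, mul_one] at h
    rw [← h]
    exact Finset.sum_congr rfl fun S _ => by rw [if_pos (Finset.inter_empty S)]
  -- inclusion-exclusion (step C)
  have hC : (∑ S ∈ Finset.powersetCard k (Finset.univ : Finset (Fin n)),
        if T ⊆ S then subdet (X * Xᵀ) S else 0)
      = ∑ W ∈ T.powerset, (-1 : ℝ) ^ W.card *
          (∑ S ∈ Finset.powersetCard k (Finset.univ : Finset (Fin n)),
            if S ∩ W = ∅ then subdet (X * Xᵀ) S else 0) := by
    simp_rw [Finset.mul_sum]
    rw [Finset.sum_comm]
    refine Finset.sum_congr rfl fun S _ => ?_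
    have h1 : ∀ W ∈ T.powerset, (-1 : ℝ) ^ W.card *
          (if S ∩ W = ∅ then subdet (X * Xᵀ) S else 0)
        = (if S ∩ W = ∅ then (-1 : ℝ) ^ W.card else 0) * subdet (X * Xᵀ) S := by
      intro W _
      split <;> ring
    rw [Finset.sum_congr rfl h1, ← Finset.sum_mul, ← Finset.sum_filter]
    have hfilt : T.powerset.filter (fun W => S ∩ W = ∅) = (T \ S).powerset := by
      ext W
      simp only [Finset.mem_filter, Finset.mem_powerset, Finset.subset_sdiff]
      constructor
      · rintro ⟨h1, h2⟩
        exact ⟨h1, Finset.disjoint_left.mpr fun a haW haS =>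
          Finset.notMem_empty a (h2 ▸ Finset.mem_inter.mpr ⟨haS, haW⟩)⟩
      · rintro ⟨h1, h2⟩
        refine ⟨h1, Finset.eq_empty_iff_forall_notMem.mpr fun a ha => ?_⟩
        rw [Finset.mem_inter] at ha
        exact (Finset.disjoint_left.mp h2) ha.2 ha.1
    rw [hfilt]
    have hpow : (∑ W ∈ (T \ S).powerset, (-1 : ℝ) ^ W.card)
        = if T ⊆ S then 1 else 0 := by
      have hz := Finset.sum_powerset_neg_one_pow_card (x := T \ S)
      have : (∑ W ∈ (T \ S).powerset, (-1 : ℝ) ^ W.card)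
          = ((∑ W ∈ (T \ S).powerset, (-1 : ℤ) ^ W.card : ℤ) : ℝ) := by
        push_cast
        rfl
      rw [this, hz]
      by_cases hTS : T ⊆ S
      · rw [if_pos (Finset.sdiff_eq_empty_iff_subset.mpr hTS), if_pos hTS]
        norm_num
      · rw [if_neg (fun h => hTS (Finset.sdiff_eq_empty_iff_subset.mp h)), if_neg hTS]
        norm_num
    rw [hpow]
    split <;> ring
  -- step D
  have hD : ∑ W ∈ T.powerset, (-1 : ℝ) ^ W.card *
        (∑ S ∈ Finset.powersetCard k (Finset.univ : Finset (Fin n)),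
          if S ∩ W = ∅ then subdet (X * Xᵀ) S else 0)
      = (Xᵀ * X).det * subdet (X * (Xᵀ * X)⁻¹ * Xᵀ) T := by
    have h1 : ∀ W ∈ T.powerset, (-1 : ℝ) ^ W.card *
          (∑ S ∈ Finset.powersetCard k (Finset.univ : Finset (Fin n)),
            if S ∩ W = ∅ then subdet (X * Xᵀ) S else 0)
        = (Xᵀ * X).det *
            (((X * (Xᵀ * X)⁻¹ * Xᵀ - 1)).submatrix
              (fun i : {x // x ∈ W} => (i : Fin n)) (fun j : {x // x ∈ W} => (j : Fin n))).det := by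
      intro W _
      rw [stepB X hGdet W]
      have hneg : ((X * (Xᵀ * X)⁻¹ * Xᵀ - 1)).submatrix
            (fun i : {x // x ∈ W} => (i : Fin n)) (fun j : {x // x ∈ W} => (j : Fin n))
          = -(((1 : Matrix (Fin n) (Fin n) ℝ) - X * (Xᵀ * X)⁻¹ * Xᵀ).submatrix
            (fun i : {x // x ∈ W} => (i : Fin n)) (fun j : {x // x ∈ W} => (j : Fin n))) := by
        ext i j
        simp [Matrix.sub_apply, Matrix.neg_apply]
      rw [hneg, Matrix.det_neg, Fintype.card_coe]
      ring
    rw [Finset.sum_congr rfl h1, ← Finset.mul_sum]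
    congr 1
    -- reindex the powerset sum to subsets of univ in the subtype of T
    have hre : ∑ W ∈ T.powerset,
          (((X * (Xᵀ * X)⁻¹ * Xᵀ - 1)).submatrix
            (fun i : {x // x ∈ W} => (i : Fin n)) (fun j : {x // x ∈ W} => (j : Fin n))).det
        = ∑ W' ∈ (Finset.univ : Finset {x // x ∈ T}).powerset,
            ((((X * (Xᵀ * X)⁻¹ * Xᵀ - 1)).submatrix
                (fun i : {x // x ∈ T} => (i : Fin n)) (fun j : {x // x ∈ T} => (j : Fin n))).submatrix
              (fun i : {x // x ∈ W'} => (i : {x // x ∈ T}))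
              (fun j : {x // x ∈ W'} => (j : {x // x ∈ T}))).det := by
      refine (Finset.sum_bij (fun (W' : Finset {x // x ∈ T}) _ =>
        W'.map (Function.Embedding.subtype _)) ?_ ?_ ?_ ?_).symm
      · intro W' _
        rw [Finset.mem_powerset]
        intro x hx
        rw [Finset.mem_map] at hx
        obtain ⟨y, -, rfl⟩ := hx
        exact y.2
      · intro W₁ h₁ W₂ h₂ hmap
        exact Finset.map_injective _ hmap
      · intro W hW
        rw [Finset.mem_powerset] at hW
        refine ⟨W.subtype _, Finset.mem_powerset.mpr (Finset.subset_univ _), ?_⟩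
        show (W.subtype _).map _ = W
        rw [Finset.subtype_map]
        exact Finset.filter_true_of_mem fun x hx => hW hx
      · intro W' _
        rw [Matrix.submatrix_submatrix]
        set emb := Function.Embedding.subtype (fun x => x ∈ T)
        have hφ : Function.Bijective (fun x : {x // x ∈ W'} =>
            (⟨((x : {x // x ∈ T}) : Fin n), Finset.mem_map_of_mem emb x.2⟩ :
              {y // y ∈ W'.map emb})) := by
          rw [Fintype.bijective_iff_injective_and_card]
          constructor
          · intro a b hab
            have h2 := congrArg (fun z : {y // y ∈ W'.map emb} => (z : Fin n)) hab
            exact Subtype.ext (Subtype.ext h2)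
          · rw [Fintype.card_coe, Fintype.card_coe, Finset.card_map]
        let e := Equiv.ofBijective _ hφ
        rw [← Matrix.det_submatrix_equiv_self e]
        rfl
    rw [hre, ← det_one_add_eq_sum_minors]
    have hfin : (1 : Matrix {x // x ∈ T} {x // x ∈ T} ℝ) +
          ((X * (Xᵀ * X)⁻¹ * Xᵀ - 1)).submatrix
            (fun i : {x // x ∈ T} => (i : Fin n)) (fun j : {x // x ∈ T} => (j : Fin n))
        = (X * (Xᵀ * X)⁻¹ * Xᵀ).submatrix
            (fun i : {x // x ∈ T} => (i : Fin n)) (fun j : {x // x ∈ T} => (j : Fin n)) := by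
      ext i j
      simp only [Matrix.add_apply, Matrix.sub_apply, Matrix.submatrix_apply, Matrix.one_apply,
        Subtype.ext_iff]
      split <;> ring
    rw [hfin]
    rfl
  -- assembly
  have hsplit : ∀ S ∈ Finset.powersetCard k (Finset.univ : Finset (Fin n)),
      (if T ⊆ S then subdet (X * Xᵀ) S /
          (∑ T' ∈ Finset.powersetCard k (Finset.univ : Finset (Fin n)), subdet (X * Xᵀ) T')
        else 0)
      = (if T ⊆ S then subdet (X * Xᵀ) S else 0) /
          (∑ T' ∈ Finset.powersetCard k (Finset.univ : Finset (Fin n)), subdet (X * Xᵀ) T') := by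
    intro S _
    split
    · rfl
    · rw [zero_div]
  rw [Finset.sum_congr rfl hsplit, ← Finset.sum_div, hC, hD, hden,
    mul_div_cancel_left₀ _ hGdet.ne_zero]
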